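/- For all α, β ∈ ℓ¹ with ‖α‖₁ ≤ 1 and ‖β‖₁ < ‖α‖₁, the space W_α contains a closed subspace isometric to W_β. -/

import Mathlib

open Filter Topology

noncomputable section

/-- `x` belongs to the hyperplane `W_α` of the space `c` of convergent real sequences:
`x` converges and its limit equals `∑' i, α i * x i` (sequences are 0-indexed). -/
def MemW (α x : ℕ → ℝ) : Prop :=
  (∃ l : ℝ, Tendsto x atTop (𝓝 l)) ∧ Tendsto x atTop (𝓝 (∑' i, α i * x i))

/-- The sup norm of a real sequence. -/
def supNorm (x : ℕ → ℝ) : ℝ := ⨆ i, |x i|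

/-- The element `r·e₁* = (r,0,0,…)` of `ℓ¹`. -/
def rSeq (r : ℝ) : ℕ → ℝ := fun i => if i = 0 then r else 0

lemma sign_mul_self' (x : ℝ) : Real.sign x * x = |x| := by
  rcases lt_trichotomy x 0 with h | h | h
  · rw [Real.sign_of_neg h, abs_of_neg h]; ring
  · simp [h]
  · rw [Real.sign_of_pos h, abs_of_pos h]; ring

lemma abs_sign_le_one (x : ℝ) : |Real.sign x| ≤ 1 := by
  rcases lt_trichotomy x 0 with h | h | h
  · rw [Real.sign_of_neg h]; norm_num
  · simp [h]
  · rw [Real.sign_of_pos h]; norm_num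

lemma summable_mul_of_bdd {g x : ℕ → ℝ} (hg : Summable fun i => |g i|)
    {M : ℝ} (hM : ∀ i, |x i| ≤ M) : Summable fun i => g i * x i := by
  apply Summable.of_norm_bounded (g := fun i => |g i| * M) (hg.mul_right M)
  intro i
  rw [Real.norm_eq_abs, abs_mul]
  exact mul_le_mul_of_nonneg_left (hM i) (abs_nonneg _)

lemma abs_tsum_mul_le {g x : ℕ → ℝ} (hg : Summable fun i => |g i|)
    {M : ℝ} (hM : ∀ i, |x i| ≤ M) :
    |∑' i, g i * x i| ≤ (∑' i, |g i|) * M := by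
  have hs : Summable fun i => g i * x i := summable_mul_of_bdd hg hM
  have hsabs : Summable fun i => |g i| * |x i| := by simpa [abs_mul] using hs.abs
  have h1 : |∑' i, g i * x i| ≤ ∑' i, |g i| * |x i| := by
    simpa [Real.norm_eq_abs] using
      norm_tsum_le_tsum_norm (f := fun i => g i * x i)
        (by simpa [Real.norm_eq_abs, abs_mul] using hs.abs)
  refine h1.trans ?_
  calc ∑' i, |g i| * |x i| ≤ ∑' i, |g i| * M :=
        Summable.tsum_le_tsum (fun i => mul_le_mul_of_nonneg_left (hM i) (abs_nonneg _))
          hsabs (hg.mul_right M)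
    _ = (∑' i, |g i|) * M := tsum_mul_right

/-- for all `α, β ∈ ℓ¹` with `‖α‖₁ ≤ 1` and `‖β‖₁ < ‖α‖₁`, the space
`W_α` contains a (closed) subspace isometric to `W_β`: there is a map, linear and
norm-preserving on `W_β`, sending `W_β` into `W_α`. -/
theorem stmt7 (α β : ℕ → ℝ) (hα : Summable fun i => |α i|) (hβ : Summable fun i => |β i|)
    (hα1 : ∑' i, |α i| ≤ 1) (hβα : ∑' i, |β i| < ∑' i, |α i|) :
    ∃ T : (ℕ → ℝ) → (ℕ → ℝ),
      (∀ x, MemW β x → MemW α (T x) ∧ supNorm (T x) = supNorm x) ∧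
      (∀ x y, MemW β x → MemW β y → T (x + y) = T x + T y) ∧
      (∀ (a : ℝ) (x : ℕ → ℝ), MemW β x → T (a • x) = a • T x) := by
  set A := ∑' i, |α i| with hA
  set B := ∑' i, |β i| with hB
  have hB0 : 0 ≤ B := tsum_nonneg fun i => abs_nonneg _
  obtain ⟨n, hn⟩ : ∃ n, (A + B) / 2 < ∑ i ∈ Finset.range n, |α i| := by
    have ht := hα.hasSum.tendsto_sum_nat
    have hlt : (A + B) / 2 < A := by linarith
    exact (ht.eventually (eventually_gt_nhds hlt)).exists
  set S := ∑ i ∈ Finset.range n, |α i| with hS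
  have hA0 : 0 ≤ A := tsum_nonneg fun i => abs_nonneg _
  have hS0 : 0 < S := by
    have h0 : (0:ℝ) ≤ (A + B) / 2 := by positivity
    linarith
  set δ : ℕ → ℝ := fun i => β i - α (n + i) with hδ
  have hαtail : Summable fun i => |α (n + i)| := by
    have := (summable_nat_add_iff (f := fun i => |α i|) n).2 hα
    simpa [add_comm] using this
  have hδsum : Summable fun i => |δ i| := by
    apply Summable.of_norm_bounded (g := fun i => |β i| + |α (n + i)|) (hβ.add hαtail)
    intro i
    rw [Real.norm_eq_abs, abs_abs]
    exact abs_sub _ _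
  have htail_eq : ∑' i, |α (n + i)| = A - S := by
    have h0 := Summable.sum_add_tsum_nat_add (f := fun i => |α i|) n hα
    rw [← hA, ← hS] at h0
    have h2 : ∑' i, |α (i + n)| = A - S := by linarith
    simpa [add_comm] using h2
  have hδS : ∑' i, |δ i| ≤ S := by
    have h1 : ∑' i, |δ i| ≤ ∑' i, (|β i| + |α (n + i)|) :=
      Summable.tsum_le_tsum (fun i => abs_sub _ _) hδsum (hβ.add hαtail)
    rw [Summable.tsum_add hβ hαtail, htail_eq, ← hB] at h1
    linarith
  refine ⟨fun x i => if i < n then Real.sign (α i) / S * (∑' k, δ k * x k) else x (i - n),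
    ?_, ?_, ?_⟩
  · rintro x ⟨⟨l, hl⟩, hlim⟩
    set L := ∑' i, β i * x i with hL
    set M := supNorm x with hM
    have hbdd : BddAbove (Set.range fun i => |x i|) := hl.abs.bddAbove_range
    have hMi : ∀ i, |x i| ≤ M := fun i => le_ciSup hbdd i
    have hM0 : 0 ≤ M := (abs_nonneg (x 0)).trans (hMi 0)
    set D := ∑' k, δ k * x k with hD
    have hDle : |D| ≤ S * M :=
      (abs_tsum_mul_le hδsum hMi).trans (mul_le_mul_of_nonneg_right hδS hM0)
    set T : ℕ → ℝ := fun i => if i < n then Real.sign (α i) / S * D else x (i - n) with hT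
    have hTbound : ∀ i, |T i| ≤ M := by
      intro i
      simp only [hT]
      by_cases h : i < n
      · rw [if_pos h, abs_mul, abs_div, abs_of_pos hS0]
        calc |Real.sign (α i)| / S * |D| ≤ 1 / S * (S * M) := by
              gcongr
              exact abs_sign_le_one _
          _ = M := by field_simp
      · rw [if_neg h]; exact hMi _
    have hTlim : Tendsto T atTop (𝓝 L) := by
      have h1 : Tendsto (fun i => x (i - n)) atTop (𝓝 L) :=
        hlim.comp (tendsto_sub_atTop_nat n)
      apply h1.congr'
      filter_upwards [eventually_ge_atTop n] with i hi
      simp only [hT]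
      rw [if_neg (Nat.not_lt.2 hi)]
    have hβx : Summable fun i => β i * x i := summable_mul_of_bdd hβ hMi
    have hδx : Summable fun i => δ i * x i := summable_mul_of_bdd hδsum hMi
    have hαT : Summable fun i => α i * T i := summable_mul_of_bdd hα hTbound
    have htsum : ∑' i, α i * T i = L := by
      have hsplit := Summable.sum_add_tsum_nat_add (f := fun i => α i * T i) n hαT
      have htailT : ∀ i : ℕ, α (i + n) * T (i + n) = β i * x i - δ i * x i := by
        intro i
        simp only [hT]
        rw [if_neg (by omega : ¬ i + n < n), Nat.add_sub_cancel]
        simp only [hδ]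
        rw [add_comm n i]
        ring
      have h2 : ∑' i, α (i + n) * T (i + n) = L - D := by
        rw [tsum_congr htailT, Summable.tsum_sub hβx hδx, ← hL, ← hD]
      have h3 : ∑ i ∈ Finset.range n, α i * T i = D := by
        have hc : ∀ i ∈ Finset.range n, α i * T i = |α i| * (D / S) := by
          intro i hi
          simp only [hT]
          rw [if_pos (Finset.mem_range.1 hi), ← sign_mul_self' (α i)]
          ring
        rw [Finset.sum_congr rfl hc, ← Finset.sum_mul, ← hS, mul_comm,
          div_mul_cancel₀ D hS0.ne']
      rw [← hsplit, h2, h3]; ring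
    have hTb : BddAbove (Set.range fun i => |T i|) :=
      ⟨M, by rintro y ⟨i, rfl⟩; exact hTbound i⟩
    constructor
    · show MemW α T
      refine ⟨⟨L, hTlim⟩, ?_⟩
      show Tendsto T atTop (𝓝 (∑' i, α i * T i))
      rw [htsum]
      exact hTlim
    · show supNorm T = M
      refine le_antisymm (ciSup_le hTbound) (ciSup_le fun k => ?_)
      calc |x k| = |T (k + n)| := by
            simp only [hT]
            rw [if_neg (by omega : ¬ k + n < n), Nat.add_sub_cancel]
        _ ≤ supNorm T := le_ciSup hTb (k + n)
  · rintro x y ⟨⟨lx, hlx⟩, -⟩ ⟨⟨ly, hly⟩, -⟩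
    have hbx : BddAbove (Set.range fun i => |x i|) := hlx.abs.bddAbove_range
    have hby : BddAbove (Set.range fun i => |y i|) := hly.abs.bddAbove_range
    have hMx : ∀ i, |x i| ≤ supNorm x := fun i => le_ciSup hbx i
    have hMy : ∀ i, |y i| ≤ supNorm y := fun i => le_ciSup hby i
    have hδx : Summable fun i => δ i * x i := summable_mul_of_bdd hδsum hMx
    have hδy : Summable fun i => δ i * y i := summable_mul_of_bdd hδsum hMy
    funext i
    simp only [Pi.add_apply]
    by_cases h : i < n
    · simp only [if_pos h]
      have ht : ∑' k, δ k * (x k + y k) = (∑' k, δ k * x k) + ∑' k, δ k * y k := by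
        rw [← Summable.tsum_add hδx hδy]
        exact tsum_congr fun k => by ring
      rw [ht]; ring
    · simp only [if_neg h]
  · rintro a x ⟨⟨lx, hlx⟩, -⟩
    have hbx : BddAbove (Set.range fun i => |x i|) := hlx.abs.bddAbove_range
    have hMx : ∀ i, |x i| ≤ supNorm x := fun i => le_ciSup hbx i
    have hδx : Summable fun i => δ i * x i := summable_mul_of_bdd hδsum hMx
    funext i
    simp only [Pi.smul_apply, smul_eq_mul]
    by_cases h : i < n
    · simp only [if_pos h]
      have ht : ∑' k, δ k * (a * x k) = a * ∑' k, δ k * x k := by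
        rw [← tsum_mul_left]
        exact tsum_congr fun k => by ring
      rw [ht]; ring
    · simp only [if_neg h]
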